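/- Let X and Y be real Banach spaces and let L : X → Y be a continuous linear operator that does not lie in the operator-norm closure of the set of finite-rank continuous linear operators from X to Y; set δ := dist(L, {finite-rank operators from X to Y}) (distance in operator norm), so δ > 0. Then for every cylindrical map G = D ∘ f ∘ E with f : ℝ^N → ℝ^{N'} Fréchet differentiable at every point, and every x ∈ X, the Fréchet derivative of G at x satisfies ‖L − DG(x)‖_{L(X,Y)} ≥ δ. In particular, for the smooth map F(x) := L x one has sup_{x ∈ K} ‖DF(x) − DG(x)‖_{L(X,Y)} ≥ δ for every nonempty compact K ⊆ X, so cylindrical maps with differentiable finite-dimensional part are not dense in the compact-open C^1 topology of C^1(X,Y) defined via operator norms of derivatives. -/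

import Mathlib

open MeasureTheory
open scoped Topology ENNReal NNReal

/-- A continuous linear operator has finite rank if its range is finite-dimensional. -/
def FiniteRankOp {X Y : Type*} [NormedAddCommGroup X] [NormedSpace ℝ X]
    [NormedAddCommGroup Y] [NormedSpace ℝ Y] (T : X →L[ℝ] Y) : Prop :=
  FiniteDimensional ℝ (LinearMap.range (T : X →ₗ[ℝ] Y))

/-- if `L` lies outside the operator-norm closure of the finite-rank operators,
with `δ` the distance from `L` to the finite-rank operators, then `δ > 0`, and for every
cylindrical map `G = D ∘ f ∘ E` with `f` everywhere differentiable, `‖L − DG(x)‖ ≥ δ` at every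
point `x`; in particular, for `F(x) := L x`, `sup_{x ∈ K} ‖DF(x) − DG(x)‖ ≥ δ` for every
nonempty compact `K ⊆ X`. -/
theorem stmt_0 {X Y : Type*} [NormedAddCommGroup X] [NormedSpace ℝ X] [CompleteSpace X]
    [NormedAddCommGroup Y] [NormedSpace ℝ Y] [CompleteSpace Y]
    (L : X →L[ℝ] Y)
    (hL : L ∉ closure {T : X →L[ℝ] Y | FiniteRankOp T})
    (δ : ℝ) (hδ : δ = Metric.infDist L {T : X →L[ℝ] Y | FiniteRankOp T}) :
    0 < δ ∧
    ∀ (N N' : ℕ) (E : X →L[ℝ] (Fin N → ℝ)) (f : (Fin N → ℝ) → (Fin N' → ℝ))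
      (D : (Fin N' → ℝ) →L[ℝ] Y), Differentiable ℝ f →
      (∀ x : X, δ ≤ ‖(L : X →L[ℝ] Y) - fderiv ℝ (fun y : X => D (f (E y))) x‖) ∧
      (∀ K : Set X, IsCompact K → K.Nonempty →
        ENNReal.ofReal δ ≤
          ⨆ x ∈ K,
            (‖fderiv ℝ (fun y : X => L y) x - fderiv ℝ (fun y : X => D (f (E y))) x‖₊ :
              ℝ≥0∞)) := by
  have hSne : ({T : X →L[ℝ] Y | FiniteRankOp T}).Nonempty := by
    refine ⟨0, ?_⟩
    simp only [Set.mem_setOf_eq, FiniteRankOp]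
    rw [show LinearMap.range ((0 : X →L[ℝ] Y) : X →ₗ[ℝ] Y) = ⊥ by rw [ContinuousLinearMap.coe_zero]; exact LinearMap.range_zero]
    infer_instance
  have hpos : 0 < δ := by
    rw [hδ]
    rcases lt_or_eq_of_le (Metric.infDist_nonneg (x := L) (s := {T : X →L[ℝ] Y | FiniteRankOp T})) with h | h
    · exact h
    · exact absurd ((Metric.mem_closure_iff_infDist_zero hSne).2 h.symm) hL
  refine ⟨hpos, fun N N' E f D hf => ?_⟩
  have key : ∀ x : X, δ ≤ ‖L - fderiv ℝ (fun y : X => D (f (E y))) x‖ := by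
    intro x
    have hder : HasFDerivAt (fun y : X => D (f (E y)))
        (D.comp ((fderiv ℝ f (E x)).comp E)) x := by
      have hE : HasFDerivAt E (E : X →L[ℝ] (Fin N → ℝ)) x := E.hasFDerivAt
      have hfd : HasFDerivAt f (fderiv ℝ f (E x)) (E x) := (hf (E x)).hasFDerivAt
      exact (D.hasFDerivAt).comp x (hfd.comp x hE)
    rw [hder.fderiv]
    have hFR : FiniteRankOp (D.comp ((fderiv ℝ f (E x)).comp E)) := by
      have hle : LinearMap.range ((D.comp ((fderiv ℝ f (E x)).comp E) : X →L[ℝ] Y) : X →ₗ[ℝ] Y) ≤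
          LinearMap.range (D : (Fin N' → ℝ) →ₗ[ℝ] Y) := by
        rintro y ⟨z, rfl⟩
        exact ⟨_, rfl⟩
      exact Submodule.finiteDimensional_of_le hle
    have := Metric.infDist_le_dist_of_mem (x := L) (s := {T : X →L[ℝ] Y | FiniteRankOp T}) hFR
    rw [dist_eq_norm] at this
    rw [hδ]
    exact this
  refine ⟨key, fun K hK ⟨x0, hx0⟩ => ?_⟩
  have hLfd : fderiv ℝ (fun y : X => L y) x0 = L := L.fderiv
  calc ENNReal.ofReal δ
      ≤ (‖fderiv ℝ (fun y : X => L y) x0 - fderiv ℝ (fun y : X => D (f (E y))) x0‖₊ : ℝ≥0∞) := by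
        rw [← enorm_eq_nnnorm, ← ofReal_norm]
        exact ENNReal.ofReal_le_ofReal (by rw [hLfd]; exact key x0)
    _ ≤ ⨆ x ∈ K, (‖fderiv ℝ (fun y : X => L y) x - fderiv ℝ (fun y : X => D (f (E y))) x‖₊ : ℝ≥0∞) :=
        le_iSup₂ (f := fun x (_ : x ∈ K) =>
          (‖fderiv ℝ (fun y : X => L y) x - fderiv ℝ (fun y : X => D (f (E y))) x‖₊ : ℝ≥0∞)) x0 hx0
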